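/- Let A be an n×n subring matrix with diagonal (p^{e_1},...,p^{e_{n-1}},1) and I = {i : e_i ≠ 0}. Then for all i, j ∈ I, the entry a_{ij} is divisible by p, and moreover for every i ∈ I, every entry of the i-th column of A is divisible by p. -/

import Mathlib

def colSpan {n : ℕ} (A : Matrix (Fin n) (Fin n) ℤ) : AddSubgroup (Fin n → ℤ) :=
  AddSubgroup.closure (Set.range fun j => fun i => A i j)

def IsSubringOf {n : ℕ} (R : AddSubgroup (Fin n → ℤ)) : Prop :=
  (fun _ => (1 : ℤ)) ∈ R ∧ ∀ u v : Fin n → ℤ, u ∈ R → v ∈ R → u * v ∈ R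

def IsHNF {n : ℕ} (A : Matrix (Fin n) (Fin n) ℤ) : Prop :=
  (∀ i j : Fin n, (j : ℕ) < (i : ℕ) → A i j = 0) ∧
  (∀ i j : Fin n, (i : ℕ) < (j : ℕ) → 0 ≤ A i j ∧ A i j < A i i)

def IsSubringMatrix {n : ℕ} (A : Matrix (Fin n) (Fin n) ℤ) : Prop :=
  IsHNF A ∧ A.det ≠ 0 ∧ IsSubringOf (colSpan A)

def GenLE {n : ℕ} (R : AddSubgroup (Fin n → ℤ)) (k : ℕ) : Prop :=
  ∃ S : Finset ((Fin n → ℤ) ⧸ R), S.card ≤ k ∧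
    AddSubgroup.closure (S : Set ((Fin n → ℤ) ⧸ R)) = ⊤

def RankGe {n : ℕ} (R : AddSubgroup (Fin n → ℤ)) (k : ℕ) : Prop :=
  ∀ S : Finset ((Fin n → ℤ) ⧸ R),
    AddSubgroup.closure (S : Set ((Fin n → ℤ) ⧸ R)) = ⊤ → k ≤ S.card

def RankEq {n : ℕ} (R : AddSubgroup (Fin n → ℤ)) (k : ℕ) : Prop :=
  GenLE R k ∧ RankGe R k
lemma mem_colSpan_of_mulVec {n : ℕ} (A : Matrix (Fin n) (Fin n) ℤ) (x : Fin n → ℤ) :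
    A.mulVec x ∈ colSpan A := by
  have : A.mulVec x = ∑ j, x j • (fun i => A i j) := by
    ext i
    simp [Matrix.mulVec, dotProduct, mul_comm]
  rw [this]
  exact AddSubgroup.sum_mem _ fun j _ =>
    AddSubgroup.zsmul_mem _ (AddSubgroup.subset_closure (Set.mem_range_self j)) _

lemma exists_mulVec_of_mem_colSpan {n : ℕ} (A : Matrix (Fin n) (Fin n) ℤ)
    {v : Fin n → ℤ} (hv : v ∈ colSpan A) : ∃ x : Fin n → ℤ, A.mulVec x = v := by
  have hle : colSpan A ≤ (A.mulVecLin.toAddMonoidHom.range) := by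
    apply (AddSubgroup.closure_le _).mpr
    rintro _ ⟨j, rfl⟩
    refine ⟨Pi.single j 1, ?_⟩
    ext i
    simp [Matrix.mulVecLin, Matrix.mulVec_single]
  obtain ⟨x, hx⟩ := hle hv
  exact ⟨x, hx⟩

lemma det_dvd_mem_colSpan {n : ℕ} (A : Matrix (Fin n) (Fin n) ℤ)
    (u : Fin n → ℤ) (h : ∀ s, A.det ∣ u s) : u ∈ colSpan A := by
  have : A.mulVec ((A.adjugate).mulVec (fun s => (h s).choose)) = u := by
    rw [Matrix.mulVec_mulVec, Matrix.mul_adjugate]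
    ext s
    rw [Matrix.smul_mulVec, Matrix.one_mulVec]
    simpa [eq_comm] using (h s).choose_spec
  rw [← this]
  exact mem_colSpan_of_mulVec A _

lemma pow_mem' {n : ℕ} {R : AddSubgroup (Fin n → ℤ)}
    (hR : ∀ u v : Fin n → ℤ, u ∈ R → v ∈ R → u * v ∈ R)
    {v : Fin n → ℤ} (hv : v ∈ R) : ∀ k : ℕ, v ^ (k + 1) ∈ R := by
  intro k
  induction k with
  | zero => simpa using hv
  | succ m ih => rw [pow_succ]; exact hR _ _ ih hv

lemma tri_solve {n : ℕ} (A : Matrix (Fin n) (Fin n) ℤ)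
    (htri : ∀ i j : Fin n, (j : ℕ) < (i : ℕ) → A i j = 0)
    (hd : ∀ t, A t t ≠ 0)
    (x χ : Fin n → ℤ) (hx : A.mulVec x = χ)
    (r : Fin n) (hχ : ∀ s, r < s → χ s = 0) :
    ∀ t, r < t → x t = 0 := by
  by_contra hcon
  push_neg at hcon
  set S := Finset.univ.filter (fun t => r < t ∧ x t ≠ 0) with hS
  have hSne : S.Nonempty := by
    obtain ⟨t, ht1, ht2⟩ := hcon
    exact ⟨t, by simp [hS, ht1, ht2]⟩
  set t := S.max' hSne with ht
  have htS : t ∈ S := S.max'_mem hSne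
  simp only [hS, Finset.mem_filter, Finset.mem_univ, true_and] at htS
  have h0 : A.mulVec x t = A t t * x t := by
    show (∑ s, A t s * x s) = A t t * x t
    apply Finset.sum_eq_single
    · intro s _ hst
      rcases lt_or_gt_of_ne hst with hlt | hgt
      · have : x s = 0 → A t s * x s = 0 := fun h => by rw [h, mul_zero]
        rw [htri t s hlt, zero_mul]
      · -- t < s, so x s = 0 by maximality
        have hs0 : x s = 0 := by
          by_contra hxs
          have : s ∈ S := by simp [hS, lt_trans htS.1 hgt, hxs]
          exact absurd (S.le_max' s this) (not_le.mpr hgt)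
        rw [hs0, mul_zero]
    · intro h; exact absurd (Finset.mem_univ t) h
  rw [hx, hχ t htS.1] at h0
  exact htS.2 (by
    rcases mul_eq_zero.mp h0.symm with h | h
    · exact absurd h (hd t)
    · exact h)

lemma key {n p : ℕ} (hp : p.Prime)
    (A : Matrix (Fin (n + 1)) (Fin (n + 1)) ℤ) (hA : IsSubringMatrix A)
    (e : Fin n → ℕ)
    (hdiag : ∀ i : Fin n, A i.castSucc i.castSucc = (p : ℤ) ^ e i)
    (hlast : A (Fin.last n) (Fin.last n) = 1)
    (j : Fin n) (hj : e j ≠ 0) : ∀ s : Fin (n + 1), (p : ℤ) ∣ A s j.castSucc := by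
  obtain ⟨⟨htri, hhnf⟩, hdet, hone, hmul⟩ := hA
  by_contra hcon
  push_neg at hcon
  -- the set of bad rows
  set S := Finset.univ.filter (fun s : Fin (n+1) => ¬ (p : ℤ) ∣ A s j.castSucc) with hS
  have hSne : S.Nonempty := by
    obtain ⟨s, hs⟩ := hcon
    exact ⟨s, by simp [hS, hs]⟩
  set r := S.max' hSne with hr
  have hrS : ¬ (p : ℤ) ∣ A r j.castSucc := by
    have := S.max'_mem hSne
    simpa [hS] using this
  -- basic facts about bad rows: any bad row is < j.castSucc
  have hbad_lt : ∀ s : Fin (n+1), ¬ (p : ℤ) ∣ A s j.castSucc → s < j.castSucc := by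
    intro s hs
    rcases lt_trichotomy s j.castSucc with h | h | h
    · exact h
    · subst h
      rw [hdiag j] at hs
      exact absurd (dvd_pow_self (p:ℤ) hj) hs
    · exact absurd (htri s j.castSucc h) (fun h0 => hs (h0 ▸ dvd_zero _))
  have hrlt : r < j.castSucc := hbad_lt r hrS
  have hrlast : (r : ℕ) < n := lt_of_lt_of_le hrlt (by simp)
  set i : Fin n := r.castLT hrlast with hi
  have hic : i.castSucc = r := rfl
  -- e i ≠ 0
  have hei : e i ≠ 0 := by
    intro h0
    have hdi : A r r = 1 := by rw [← hic, hdiag i, h0, pow_zero]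
    have := hhnf r j.castSucc hrlt
    rw [hdi] at this
    have : A r j.castSucc = 0 := le_antisymm (by omega) this.1
    exact hrS (this ▸ dvd_zero _)
  -- the exponent sum
  set E := ∑ t : Fin n, e t with hE
  have hE1 : 1 ≤ E := le_trans (Nat.one_le_iff_ne_zero.mpr hj)
    (Finset.single_le_sum (f := e) (fun t _ => Nat.zero_le _) (Finset.mem_univ j))
  have hdetA : A.det = (p : ℤ) ^ E := by
    rw [Matrix.det_of_upperTriangular htri, Fin.prod_univ_castSucc]
    simp only [hdiag, hlast, mul_one]
    rw [Finset.prod_pow_eq_pow_sum]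
  -- χ, v, k
  set v : Fin (n+1) → ℤ := fun s => A s j.castSucc with hv
  set χ : Fin (n+1) → ℤ := fun s => if (p : ℤ) ∣ v s then 0 else 1 with hχ
  have hvmem : v ∈ colSpan A := AddSubgroup.subset_closure (Set.mem_range_self j.castSucc)
  set k := E * Nat.totient (p ^ E) with hk
  have hφ : 1 ≤ Nat.totient (p ^ E) := Nat.totient_pos.mpr (pow_pos hp.pos E)
  have hkE : E ≤ k := Nat.le_mul_of_pos_right E hφ
  have hk1 : 1 ≤ k := le_trans hE1 hkE
  have hvk : v ^ k ∈ colSpan A := by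
    obtain ⟨m, hm⟩ := Nat.exists_eq_add_of_le hk1
    rw [hm, Nat.add_comm 1 m]
    exact pow_mem' hmul hvmem m
  have hdvd : ∀ s, A.det ∣ (χ - v ^ k) s := by
    intro s
    rw [hdetA]
    simp only [Pi.sub_apply, Pi.pow_apply]
    by_cases hps : (p : ℤ) ∣ v s
    · have : χ s = 0 := by rw [hχ]; simp [hps]
      rw [this, zero_sub, dvd_neg]
      exact dvd_trans (pow_dvd_pow _ hkE) (pow_dvd_pow_of_dvd hps k)
    · have hχs : χ s = 1 := by rw [hχ]; simp [hps]
      rw [hχs]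
      -- v s ≥ 0 since s < j.castSucc
      have hslt : s < j.castSucc := hbad_lt s hps
      have hnn : 0 ≤ v s := (hhnf s j.castSucc hslt).1
      set b := (v s).toNat with hb
      have hbv : (b : ℤ) = v s := Int.toNat_of_nonneg hnn
      have hpb : ¬ (p : ℕ) ∣ b := by
        intro hd
        exact hps (hbv ▸ Int.natCast_dvd_natCast.mpr hd)
      have hcop : Nat.Coprime b (p ^ E) :=
        Nat.Coprime.pow_right E ((Nat.coprime_comm.mp ((hp.coprime_iff_not_dvd).mpr hpb)))
      have heuler : b ^ Nat.totient (p ^ E) ≡ 1 [MOD p ^ E] := Nat.ModEq.pow_totient hcop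
      have hmodeq : b ^ k ≡ 1 [MOD p ^ E] := by
        rw [hk, mul_comm, pow_mul]
        calc (b ^ Nat.totient (p ^ E)) ^ E ≡ 1 ^ E [MOD p ^ E] := heuler.pow E
          _ = 1 := one_pow E
      have := (Nat.modEq_iff_dvd).mp hmodeq
      -- this : (p^E : ℤ) ∣ (1 : ℤ) - (b^k : ℤ)
      push_cast at this
      rw [hbv] at this
      exact this
  have hχmem : χ ∈ colSpan A := by
    have h2 : χ - v ^ k ∈ colSpan A := det_dvd_mem_colSpan A _ hdvd
    have := AddSubgroup.add_mem _ h2 hvk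
    simpa using this
  obtain ⟨x, hx⟩ := exists_mulVec_of_mem_colSpan A hχmem
  -- diagonal entries nonzero
  have hd : ∀ t : Fin (n+1), A t t ≠ 0 := by
    intro t
    refine Fin.lastCases ?_ ?_ t
    · rw [hlast]; exact one_ne_zero
    · intro t'
      rw [hdiag t']
      exact pow_ne_zero _ (by exact_mod_cast hp.ne_zero)
  have hχ0 : ∀ s, r < s → χ s = 0 := by
    intro s hs
    have : (p : ℤ) ∣ v s := by
      by_contra hps
      have : s ∈ S := by simp [hS, hps]; exact hps
      exact absurd (S.le_max' s this) (not_le.mpr hs)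
    rw [hχ]; simp [this]
  have hx0 : ∀ t, r < t → x t = 0 := tri_solve A htri hd x χ hx r hχ0
  -- row r
  have hrow : A.mulVec x r = A r r * x r := by
    show (∑ s, A r s * x s) = A r r * x r
    apply Finset.sum_eq_single
    · intro s _ hst
      rcases lt_or_gt_of_ne hst with hlt | hgt
      · rw [htri r s hlt, zero_mul]
      · rw [hx0 s hgt, mul_zero]
    · intro h; exact absurd (Finset.mem_univ r) h
  rw [hx] at hrow
  have hχr : χ r = 1 := by rw [hχ]; simp [hrS]; exact hrS
  rw [hχr, ← hic, hdiag i] at hrow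
  have hpdvd1 : (p : ℤ) ∣ 1 := by
    rw [hrow]
    exact Dvd.dvd.mul_right (dvd_pow_self (p:ℤ) hei) _
  have := Int.le_of_dvd one_pos hpdvd1
  have h1 : p ≤ 1 := by exact_mod_cast this
  have h2 := hp.two_le
  omega

theorem subring_matrix_divisibility (n p : ℕ) (hp : p.Prime)
    (A : Matrix (Fin (n + 1)) (Fin (n + 1)) ℤ) (hA : IsSubringMatrix A)
    (e : Fin n → ℕ)
    (hdiag : ∀ i : Fin n, A i.castSucc i.castSucc = (p : ℤ) ^ e i)
    (hlast : A (Fin.last n) (Fin.last n) = 1) :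
    (∀ i j : Fin n, e i ≠ 0 → e j ≠ 0 → (p : ℤ) ∣ A i.castSucc j.castSucc) ∧
    (∀ i : Fin n, e i ≠ 0 → ∀ r : Fin (n + 1), (p : ℤ) ∣ A r i.castSucc) := by
  constructor
  · intro i j hi hj
    exact key hp A hA e hdiag hlast j hj i.castSucc
  · intro i hi r
    exact key hp A hA e hdiag hlast i hi r
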